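/- For every positive integer n, the sign-twisted generating function of the odd length over the quotient D_n^{[n-1]} (the ascending even signed permutations) satisfies Σ_{σ} (-1)^{ℓ(σ)} x^{L(σ)} = ∏_{i=2}^{n} (1 + (-1)^{i-1} x^{⌊i/2⌋}), where the sum runs over all even signed permutations σ of degree n with σ(1) < σ(2) < ⋯ < σ(n). -/

import Mathlib

open Polynomial Finset

namespace OddLength

/-- A signed permutation of degree `n`, encoded as an underlying permutation of
`Fin n` together with a sign vector. -/
abbrev SP (n : ℕ) := Equiv.Perm (Fin n) × (Fin n → Bool)

/-- The one-line value `σ(i)` of a signed permutation, for `i ∈ [1,n]` (and `0` elsewhere). -/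
def sval {n : ℕ} (σ : SP n) (i : ℕ) : ℤ :=
  if h : 1 ≤ i ∧ i ≤ n then
    (if σ.2 ⟨i - 1, by omega⟩ then (-1 : ℤ) else 1) *
      (((σ.1 ⟨i - 1, by omega⟩ : Fin n) : ℕ) + 1 : ℤ)
  else 0

/-- A signed permutation is *even* (lies in the Weyl group `D_n`) if it has an even
number of negative entries in its one-line notation. -/
def IsEvenSP {n : ℕ} (σ : SP n) : Prop :=
  Even ((Finset.univ.filter (fun i => σ.2 i = true)).card)

instance {n : ℕ} (σ : SP n) : Decidable (IsEvenSP σ) := by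
  unfold IsEvenSP; infer_instance

/-- Pairs `1 ≤ i < j ≤ n` of positions. -/
def pairs (n : ℕ) : Finset (ℕ × ℕ) :=
  (Finset.Icc 1 n ×ˢ Finset.Icc 1 n).filter (fun p => p.1 < p.2)

/-- Number of inversions. -/
def invSP {n : ℕ} (σ : SP n) : ℕ :=
  ((pairs n).filter (fun p => sval σ p.2 < sval σ p.1)).card

/-- Number of negative sum pairs. -/
def nspSP {n : ℕ} (σ : SP n) : ℕ :=
  ((pairs n).filter (fun p => sval σ p.1 + sval σ p.2 < 0)).card

/-- Number of odd inversions (positions of different parity). -/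
def oinvSP {n : ℕ} (σ : SP n) : ℕ :=
  ((pairs n).filter (fun p => sval σ p.2 < sval σ p.1 ∧ p.1 % 2 ≠ p.2 % 2)).card

/-- Number of odd negative sum pairs (positions of different parity). -/
def onspSP {n : ℕ} (σ : SP n) : ℕ :=
  ((pairs n).filter (fun p => sval σ p.1 + sval σ p.2 < 0 ∧ p.1 % 2 ≠ p.2 % 2)).card

/-- The type-`D` Coxeter length `ℓ(σ) = inv(σ) + nsp(σ)`. -/
def ellD {n : ℕ} (σ : SP n) : ℕ := invSP σ + nspSP σ

/-- The type-`D` odd length `L(σ) = oinv(σ) + onsp(σ)`. -/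
def LD {n : ℕ} (σ : SP n) : ℕ := oinvSP σ + onspSP σ

/-- The descent value at position `i`, with the type-`D` convention `σ(0) := -σ(2)`. -/
def dval {n : ℕ} (σ : SP n) (i : ℕ) : ℤ := if i = 0 then -sval σ 2 else sval σ i

/-- Membership in the parabolic quotient `D_n^I`: `σ(i) < σ(i+1)` for all `i ∈ I`,
with the convention `σ(0) = -σ(2)`. -/
def InQuot {n : ℕ} (σ : SP n) (I : Finset ℕ) : Prop :=
  ∀ i ∈ I, dval σ i < dval σ (i + 1)

instance {n : ℕ} (σ : SP n) (I : Finset ℕ) : Decidable (InQuot σ I) := by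
  unfold InQuot; infer_instance

/-- `σ` is ascending: `σ(1) < σ(2) < ⋯ < σ(n)`. -/
def Ascending {n : ℕ} (σ : SP n) : Prop :=
  ∀ i, 1 ≤ i → i < n → sval σ i < sval σ (i + 1)

/-- `σ` is a chessboard element: `σ(i) ≢ σ(i+1) (mod 2)` for all `i ∈ [n-1]`. -/
def Chessboard {n : ℕ} (σ : SP n) : Prop :=
  ∀ i ∈ Finset.Icc 1 (n - 1), sval σ i % 2 ≠ sval σ (i + 1) % 2

instance {n : ℕ} (σ : SP n) : Decidable (Chessboard σ) := by
  unfold Chessboard; infer_instance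

/-- The sign-twisted generating function of the odd length over `D_n^I`. -/
noncomputable def genD (n : ℕ) (I : Finset ℕ) : Polynomial ℤ :=
  ∑ σ ∈ Finset.univ.filter (fun σ : SP n => IsEvenSP σ ∧ InQuot σ I),
    (-1 : Polynomial ℤ) ^ ellD σ * X ^ LD σ


section Dev

variable {n : ℕ}

/-- key value of index `a`: `-(a+1)` if negated, else `a+1`. -/
def mS (S : Finset (Fin n)) (a : Fin n) : ℤ :=
  if a ∈ S then -((a : ℕ) + 1) else ((a : ℕ) + 1)

/-- position (0-indexed) of value-index `a` in the sorted one-line notation. -/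
def pS (S : Finset (Fin n)) (a : Fin n) : ℕ :=
  if a ∈ S then (S.filter (fun b => a < b)).card
  else S.card + (Finset.univ.filter (fun c => c ∉ S ∧ c < a)).card

lemma mS_injective (S : Finset (Fin n)) : Function.Injective (mS S) := by
  intro a b h
  by_cases ha : a ∈ S <;> by_cases hb : b ∈ S <;>
    simp only [mS, ha, hb, if_true, if_false] at h <;>
    · apply Fin.ext; omega

lemma mS_lt_mS (S : Finset (Fin n)) {a b : Fin n} (h : mS S a < mS S b) :
    pS S a < pS S b := by
  by_cases ha : a ∈ S <;> by_cases hb : b ∈ S <;>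
      simp only [mS, ha, hb, if_true, if_false] at h <;>
      simp only [pS, ha, hb, if_true, if_false]
  · -- both in S : b < a
    have hba : b < a := by rw [Fin.lt_def]; omega
    apply Finset.card_lt_card
    rw [Finset.ssubset_iff_of_subset]
    · exact ⟨a, by simp [ha, hba], by simp⟩
    · intro x hx
      simp only [Finset.mem_filter] at hx ⊢
      exact ⟨hx.1, lt_trans hba hx.2⟩
  · -- a ∈ S, b ∉ S
    have h1 : (S.filter (fun b => a < b)) ⊆ S.erase a := by
      intro x hx
      simp only [Finset.mem_filter] at hx
      exact Finset.mem_erase.2 ⟨by rintro rfl; exact lt_irrefl _ hx.2, hx.1⟩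
    have h2 := Finset.card_le_card h1
    have h3 : (S.erase a).card = S.card - 1 := Finset.card_erase_of_mem ha
    have h4 : 0 < S.card := Finset.card_pos.2 ⟨a, ha⟩
    omega
  · omega
  · -- neither in S : a < b
    have hab : a < b := by rw [Fin.lt_def]; omega
    have : (Finset.univ.filter (fun c => c ∉ S ∧ c < a)) ⊂
        (Finset.univ.filter (fun c => c ∉ S ∧ c < b)) := by
      rw [Finset.ssubset_iff_of_subset]
      · exact ⟨a, by simp [ha, hab], by simp⟩
      · intro x hx
        simp only [Finset.mem_filter] at hx ⊢
        exact ⟨Finset.mem_univ _, hx.2.1, lt_trans hx.2.2 hab⟩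
    have := Finset.card_lt_card this
    omega

lemma pS_lt_iff (S : Finset (Fin n)) (a b : Fin n) :
    pS S a < pS S b ↔ mS S a < mS S b := by
  constructor
  · intro h
    rcases lt_trichotomy (mS S a) (mS S b) with h' | h' | h'
    · exact h'
    · exact absurd h (by have := mS_injective S h'; subst this; omega)
    · exact absurd (mS_lt_mS S h') (by omega)
  · exact mS_lt_mS S

lemma pS_lt (S : Finset (Fin n)) (a : Fin n) : pS S a < n := by
  by_cases ha : a ∈ S <;> simp only [pS, ha, if_true, if_false]
  · have h1 : (S.filter (fun b => a < b)) ⊆ S.erase a := by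
      intro x hx
      simp only [Finset.mem_filter] at hx
      exact Finset.mem_erase.2 ⟨by rintro rfl; exact lt_irrefl _ hx.2, hx.1⟩
    have h2 := Finset.card_le_card h1
    have h3 : (S.erase a).card = S.card - 1 := Finset.card_erase_of_mem ha
    have h4 : 0 < S.card := Finset.card_pos.2 ⟨a, ha⟩
    have h5 : S.card ≤ n := by
      simpa using Finset.card_le_card (Finset.subset_univ S)
    omega
  · have hdisj : Disjoint S (Finset.univ.filter (fun c => c ∉ S ∧ c < a)) := by
      rw [Finset.disjoint_left]
      intro x hx hx'
      simp only [Finset.mem_filter] at hx'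
      exact hx'.2.1 hx
    have h1 : S ∪ (Finset.univ.filter (fun c => c ∉ S ∧ c < a)) ⊆ Finset.univ.erase a := by
      intro x hx
      rcases Finset.mem_union.1 hx with hx2 | hx2
      · exact Finset.mem_erase.2 ⟨fun he => ha (he ▸ hx2), Finset.mem_univ _⟩
      · simp only [Finset.mem_filter] at hx2
        exact Finset.mem_erase.2 ⟨fun he => absurd hx2.2.2 (by rw [he]; exact lt_irrefl _), Finset.mem_univ _⟩
    have h2 := Finset.card_le_card h1
    rw [Finset.card_union_of_disjoint hdisj] at h2
    have h3 : (Finset.univ.erase a).card = n - 1 := by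
      rw [Finset.card_erase_of_mem (Finset.mem_univ a)]; simp
    have h4 : 0 < n := a.pos
    omega


/-- The sorting bijection: value-index `a` sits at position `pS S a`. -/
noncomputable def qS (S : Finset (Fin n)) : Fin n ≃ Fin n :=
  Equiv.ofBijective (fun a => (⟨pS S a, pS_lt S a⟩ : Fin n))
    (Finite.injective_iff_bijective.1 (by
      intro a b hab
      by_contra hne
      have hm : mS S a ≠ mS S b := fun h => hne (mS_injective S h)
      have hp : pS S a = pS S b := by
        have := congrArg Fin.val hab; simpa using this
      rcases lt_trichotomy (mS S a) (mS S b) with h | h | h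
      · have := mS_lt_mS S h; omega
      · exact hm h
      · have := mS_lt_mS S h; omega))

lemma qS_apply (S : Finset (Fin n)) (a : Fin n) : (qS S a : ℕ) = pS S a := rfl

lemma pS_qS_symm (S : Finset (Fin n)) (i : Fin n) : pS S ((qS S).symm i) = (i : ℕ) :=
  congrArg Fin.val ((qS S).apply_symm_apply i)

lemma pS_injective (S : Finset (Fin n)) : Function.Injective (pS S) := by
  intro a b h
  have : qS S a = qS S b := Fin.ext h
  exact (qS S).injective this

lemma qS_symm_mono (S : Finset (Fin n)) {i j : Fin n} (h : i < j) :
    mS S ((qS S).symm i) < mS S ((qS S).symm j) := by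
  rw [← pS_lt_iff, pS_qS_symm, pS_qS_symm]
  exact h

/-- The ascending signed permutation with negated value set `S`. -/
noncomputable def sigS (S : Finset (Fin n)) : SP n :=
  ((qS S).symm, fun i => decide ((qS S).symm i ∈ S))

lemma sval_sigS (S : Finset (Fin n)) (i : ℕ) (h1 : 1 ≤ i) (h2 : i ≤ n) :
    sval (sigS S) i = mS S ((qS S).symm ⟨i - 1, by omega⟩) := by
  rw [sval, dif_pos ⟨h1, h2⟩]
  by_cases hm : (qS S).symm ⟨i - 1, by omega⟩ ∈ S <;>
    simp [sigS, mS, hm]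

/-- Key characterization of negative-sum ordered pairs of values. -/
lemma vl (S : Finset (Fin n)) (a b : Fin n) :
    (mS S a < mS S b ∧ mS S a + mS S b < 0) ↔ (a ∈ S ∧ b < a) := by
  by_cases ha : a ∈ S <;> by_cases hb : b ∈ S <;>
    simp only [mS, ha, hb, if_true, if_false, Fin.lt_def, true_and, and_true,
      false_and, and_false, iff_false, not_and, not_lt] <;>
    omega

lemma sval_mono (S : Finset (Fin n)) {i j : ℕ} (h1 : 1 ≤ i) (h : i < j) (h2 : j ≤ n) :
    sval (sigS S) i < sval (sigS S) j := by
  rw [sval_sigS S i h1 (by omega), sval_sigS S j (by omega) h2]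
  exact qS_symm_mono S (by rw [Fin.lt_def]; simp; omega)

lemma mem_pairs {p : ℕ × ℕ} : p ∈ pairs n ↔ 1 ≤ p.1 ∧ p.2 ≤ n ∧ p.1 < p.2 := by
  simp only [pairs, Finset.mem_filter, Finset.mem_product, Finset.mem_Icc]
  omega

lemma invSP_sigS (S : Finset (Fin n)) : invSP (sigS S) = 0 := by
  rw [invSP, Finset.card_eq_zero, Finset.filter_eq_empty_iff]
  intro p hp
  rw [mem_pairs] at hp
  exact not_lt.2 (le_of_lt (sval_mono S hp.1 hp.2.2 hp.2.1))

lemma oinvSP_sigS (S : Finset (Fin n)) : oinvSP (sigS S) = 0 := by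
  rw [oinvSP, Finset.card_eq_zero, Finset.filter_eq_empty_iff]
  intro p hp hcon
  rw [mem_pairs] at hp
  exact absurd hcon.1 (not_lt.2 (le_of_lt (sval_mono S hp.1 hp.2.2 hp.2.1)))

lemma qS_symm_pS (S : Finset (Fin n)) (a : Fin n) (h : pS S a < n) :
    (qS S).symm ⟨pS S a, h⟩ = a := by
  have : (⟨pS S a, h⟩ : Fin n) = qS S a := Fin.ext (by simp [qS_apply])
  rw [this, Equiv.symm_apply_apply]

lemma sval_sigS_pos (S : Finset (Fin n)) (a : Fin n) :
    sval (sigS S) (pS S a + 1) = mS S a := by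
  have hlt := pS_lt S a
  rw [sval_sigS S _ (by omega) (by omega)]
  congr 1
  have : (⟨pS S a + 1 - 1, by omega⟩ : Fin n) = ⟨pS S a, hlt⟩ := Fin.ext (by simp)
  rw [this, qS_symm_pS]

lemma card_filter_fin_lt (a : Fin n) :
    (Finset.univ.filter (fun b : Fin n => b < a)).card = (a : ℕ) := by
  rw [← Finset.card_range (a : ℕ)]
  apply Finset.card_nbij (i := Fin.val)
  · intro b hb
    simp only [Finset.mem_coe, Finset.mem_filter, Fin.lt_def] at hb
    simpa using hb.2
  · exact Fin.val_injective.injOn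
  · intro x hx
    simp only [Finset.coe_range, Set.mem_Iio] at hx
    exact ⟨⟨x, lt_trans hx a.isLt⟩, by simp only [Finset.coe_filter, Set.mem_setOf_eq, Finset.mem_univ, true_and, Fin.lt_def]; exact hx, rfl⟩

lemma card_filter_fin_le (a : Fin n) :
    (Finset.univ.filter (fun b : Fin n => b ≤ a)).card = (a : ℕ) + 1 := by
  rw [← Finset.card_range ((a : ℕ) + 1)]
  apply Finset.card_nbij (i := Fin.val)
  · intro b hb
    simp only [Finset.mem_coe, Finset.mem_filter, Fin.le_def] at hb
    simp only [Finset.coe_range, Set.mem_Iio]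
    omega
  · exact Fin.val_injective.injOn
  · intro x hx
    simp only [Finset.coe_range, Set.mem_Iio] at hx
    have hxn : x < n := by have := a.isLt; omega
    exact ⟨⟨x, hxn⟩, by simp only [Finset.coe_filter, Set.mem_setOf_eq, Finset.mem_univ, true_and, Fin.le_def]; omega, rfl⟩

lemma icc_parity (s k : ℕ) :
    ((Finset.Icc (s+1) (s+k)).filter (fun x => x % 2 ≠ s % 2)).card = (k+1)/2 := by
  induction k with
  | zero => simp
  | succ k ih =>
    have hins : Finset.Icc (s+1) (s+(k+1)) = insert (s+k+1) (Finset.Icc (s+1) (s+k)) := by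
      ext x; simp only [Finset.mem_Icc, Finset.mem_insert]; omega
    rw [hins, Finset.filter_insert]
    have hnot : s+k+1 ∉ (Finset.Icc (s+1) (s+k)).filter (fun x => x % 2 ≠ s % 2) := by
      simp only [Finset.mem_filter, Finset.mem_Icc]
      omega
    by_cases hp : (s+k+1) % 2 ≠ s % 2
    · rw [if_pos hp, Finset.card_insert_of_notMem hnot, ih]
      omega
    · rw [if_neg hp, ih]
      omega

lemma pS_lt_of_mem (S : Finset (Fin n)) {a b : Fin n} (ha : a ∈ S) (hb : b < a) :
    pS S a < pS S b :=
  mS_lt_mS S ((vl S a b).2 ⟨ha, hb⟩).1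

lemma pS_le_of_mem (S : Finset (Fin n)) {a b : Fin n} (ha : a ∈ S) (hb : b < a) :
    pS S b ≤ pS S a + (a : ℕ) := by
  have h1 := pS_lt_of_mem S ha hb
  have hbn := pS_lt S b
  have hle : (Finset.Ico (pS S a) (pS S b)).card ≤
      (Finset.univ.filter (fun c : Fin n => c ≤ a ∧ c ≠ b)).card := by
    apply Finset.card_le_card_of_injOn
      (f := fun x : ℕ => (qS S).symm ⟨x % n, Nat.mod_lt _ a.pos⟩)
    · intro x hx
      simp only [Finset.mem_coe, Finset.mem_Ico] at hx
      have hxn : x < n := by omega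
      have hfin : (⟨x % n, Nat.mod_lt _ a.pos⟩ : Fin n) = ⟨x, hxn⟩ :=
        Fin.ext (Nat.mod_eq_of_lt hxn)
      beta_reduce
      rw [hfin]
      set c := (qS S).symm ⟨x, hxn⟩ with hc
      have hpc : pS S c = x := pS_qS_symm S ⟨x, hxn⟩
      have hcb : mS S c < mS S b := (pS_lt_iff S c b).1 (by omega)
      have hac : ¬ mS S c < mS S a := fun hcon => by
        have := (pS_lt_iff S c a).2 hcon; omega
      simp only [Finset.mem_coe, Finset.mem_filter, Finset.mem_univ, true_and]
      constructor
      · -- c ≤ a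
        have hmb : mS S b ≤ (b : ℕ) + 1 := by
          by_cases h : b ∈ S <;> simp only [mS, h, if_true, if_false] <;> omega
        have hma : mS S a = -((a : ℕ) + 1) := by simp [mS, ha]
        rw [Fin.le_def]
        have hblta : (b : ℕ) < (a : ℕ) := hb
        by_cases hcS : c ∈ S <;> simp only [mS, hcS, if_true, if_false] at hcb hac <;> omega
      · -- c ≠ b
        intro hcon
        rw [hcon] at hpc
        omega
    · intro x hx y hy hxy
      simp only [Finset.coe_Ico, Set.mem_Ico] at hx hy
      have hxn : x < n := by omega
      have hyn : y < n := by omega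
      have := (qS S).symm.injective hxy
      have := congrArg Fin.val this
      simp only [Nat.mod_eq_of_lt hxn, Nat.mod_eq_of_lt hyn] at this
      exact this
  have hcard2 : (Finset.univ.filter (fun c : Fin n => c ≤ a ∧ c ≠ b)).card = (a : ℕ) := by
    have heq : Finset.univ.filter (fun c : Fin n => c ≤ a ∧ c ≠ b) =
        (Finset.univ.filter (fun c : Fin n => c ≤ a)).erase b := by
      ext c
      simp only [Finset.mem_filter, Finset.mem_erase, Finset.mem_univ, true_and]
      tauto
    rw [heq, Finset.card_erase_of_mem (by simp [le_of_lt hb]), card_filter_fin_le]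
    omega
  rw [Nat.card_Ico] at hle
  omega

lemma pS_block (S : Finset (Fin n)) {a : Fin n} (ha : a ∈ S) :
    (Finset.univ.filter (fun b : Fin n => b < a)).image (pS S) =
      Finset.Icc (pS S a + 1) (pS S a + (a : ℕ)) := by
  apply Finset.eq_of_subset_of_card_le
  · intro x hx
    obtain ⟨b, hb, rfl⟩ := Finset.mem_image.1 hx
    simp only [Finset.mem_filter] at hb
    have := pS_lt_of_mem S ha hb.2
    have := pS_le_of_mem S ha hb.2
    simp only [Finset.mem_Icc]
    omega
  · rw [Finset.card_image_of_injOn ((pS_injective S).injOn), card_filter_fin_lt,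
      Nat.card_Icc]
    omega

lemma parity_block (S : Finset (Fin n)) {a : Fin n} (ha : a ∈ S) :
    (Finset.univ.filter (fun b : Fin n =>
      b < a ∧ pS S b % 2 ≠ pS S a % 2)).card = ((a : ℕ) + 1) / 2 := by
  rw [← icc_parity (pS S a) (a : ℕ)]
  apply Finset.card_nbij (i := pS S)
  · intro b hb
    simp only [Finset.mem_coe, Finset.mem_filter, Finset.mem_univ, true_and] at hb
    have hmem : pS S b ∈ Finset.Icc (pS S a + 1) (pS S a + (a : ℕ)) := by
      rw [← pS_block S ha]
      exact Finset.mem_image_of_mem _ (by simp [hb.1])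
    exact Finset.mem_filter.2 ⟨hmem, hb.2⟩
  · exact (pS_injective S).injOn
  · intro x hx
    simp only [Finset.coe_filter, Set.mem_setOf_eq] at hx
    have hx1 : x ∈ Finset.Icc (pS S a + 1) (pS S a + (a : ℕ)) := hx.1
    rw [← pS_block S ha] at hx1
    obtain ⟨b, hb, hbx⟩ := Finset.mem_image.1 hx1
    simp only [Finset.mem_filter] at hb
    refine ⟨b, ?_, hbx⟩
    simp only [Finset.coe_filter, Set.mem_setOf_eq, Finset.mem_univ, true_and]
    exact ⟨hb.2, by rw [hbx]; exact hx.2⟩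

lemma nsp_bij (S : Finset (Fin n)) (par : Bool) :
    ((pairs n).filter (fun p => sval (sigS S) p.1 + sval (sigS S) p.2 < 0 ∧
        (par = true → p.1 % 2 ≠ p.2 % 2))).card =
    ((Finset.univ ×ˢ Finset.univ).filter (fun ab : Fin n × Fin n =>
        (ab.1 ∈ S ∧ ab.2 < ab.1) ∧
        (par = true → pS S ab.1 % 2 ≠ pS S ab.2 % 2))).card := by
  symm
  apply Finset.card_nbij (i := fun ab => (pS S ab.1 + 1, pS S ab.2 + 1))
  · intro ab hab
    simp only [Finset.mem_coe, Finset.mem_filter, Finset.mem_product] at hab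
    obtain ⟨-, ⟨ha, hblt⟩, hpar⟩ := hab
    have hvl := (vl S ab.1 ab.2).2 ⟨ha, hblt⟩
    have hps : pS S ab.1 < pS S ab.2 := mS_lt_mS S hvl.1
    have h2n := pS_lt S ab.2
    beta_reduce
    refine Finset.mem_filter.2 ⟨mem_pairs.2 ⟨by omega, by omega, by omega⟩, ?_, ?_⟩
    · rw [sval_sigS_pos, sval_sigS_pos]
      exact hvl.2
    · intro hp
      have := hpar hp
      omega
  · intro x hx y hy hxy
    simp only [Prod.mk.injEq] at hxy
    have h1 : pS S x.1 = pS S y.1 := by omega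
    have h2 : pS S x.2 = pS S y.2 := by omega
    exact Prod.ext (pS_injective S h1) (pS_injective S h2)
  · intro p hp
    simp only [Finset.coe_filter, Set.mem_setOf_eq] at hp
    obtain ⟨hpairs, hsum, hpar⟩ := hp
    rw [mem_pairs] at hpairs
    obtain ⟨h1, h2, h12⟩ := hpairs
    have ha1 : p.1 - 1 < n := by omega
    have ha2 : p.2 - 1 < n := by omega
    set a := (qS S).symm ⟨p.1 - 1, ha1⟩ with hadef
    set b := (qS S).symm ⟨p.2 - 1, ha2⟩ with hbdef
    have hpa : pS S a = p.1 - 1 := pS_qS_symm S _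
    have hpb : pS S b = p.2 - 1 := pS_qS_symm S _
    have hmab : mS S a < mS S b := by
      rw [← pS_lt_iff, hpa, hpb]
      omega
    have hsum' : mS S a + mS S b < 0 := by
      rw [sval_sigS S p.1 h1 (by omega), sval_sigS S p.2 (by omega) h2] at hsum
      exact hsum
    have hvl := (vl S a b).1 ⟨hmab, hsum'⟩
    refine ⟨(a, b), ?_, ?_⟩
    · simp only [Finset.coe_filter, Set.mem_setOf_eq, Finset.mem_product,
        Finset.mem_univ, and_self, true_and]
      refine ⟨⟨hvl.1, hvl.2⟩, ?_⟩
      intro hpp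
      have := hpar hpp
      rw [hpa, hpb]
      omega
    · have hfix : (pS S a + 1, pS S b + 1) = p := by
        rw [hpa, hpb]
        obtain ⟨p1, p2⟩ := p
        simp only [Prod.mk.injEq]
        simp only [Finset.coe_filter] at *
        constructor <;> omega
      exact hfix

lemma nspSP_sigS (S : Finset (Fin n)) : nspSP (sigS S) = ∑ a ∈ S, (a : ℕ) := by
  have h := nsp_bij S false
  simp only [Bool.false_eq_true, false_implies, and_true] at h
  rw [nspSP]
  rw [h, Finset.card_filter, Finset.sum_product]
  have hinner : ∀ a : Fin n, (∑ b : Fin n, if a ∈ S ∧ b < a then 1 else 0) =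
      if a ∈ S then (a : ℕ) else 0 := by
    intro a
    by_cases ha : a ∈ S
    · simp only [ha, true_and, if_true]
      rw [← card_filter_fin_lt a, Finset.card_filter]
    · simp [ha]
  rw [Finset.sum_congr rfl (fun a _ => hinner a)]
  rw [Finset.sum_ite_mem]
  simp

lemma onspSP_sigS (S : Finset (Fin n)) :
    onspSP (sigS S) = ∑ a ∈ S, ((a : ℕ) + 1) / 2 := by
  have h := nsp_bij S true
  simp only [true_implies] at h
  rw [onspSP]
  rw [h, Finset.card_filter, Finset.sum_product]
  have hinner : ∀ a : Fin n,
      (∑ b : Fin n, if (a ∈ S ∧ b < a) ∧ pS S a % 2 ≠ pS S b % 2 then 1 else 0) =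
      if a ∈ S then ((a : ℕ) + 1) / 2 else 0 := by
    intro a
    by_cases ha : a ∈ S
    · simp only [ha, true_and, if_true]
      rw [← parity_block S ha, Finset.card_filter]
      apply Finset.sum_congr rfl
      intro b _
      congr 1
      simp only [eq_iff_iff]
      constructor
      · rintro ⟨h1, h2⟩; exact ⟨h1, fun hc => h2 hc.symm⟩
      · rintro ⟨h1, h2⟩; exact ⟨h1, fun hc => h2 hc.symm⟩
    · simp [ha]
  rw [Finset.sum_congr rfl (fun a _ => hinner a)]
  rw [Finset.sum_ite_mem]
  simp

lemma ellD_sigS (S : Finset (Fin n)) : ellD (sigS S) = ∑ a ∈ S, (a : ℕ) := by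
  rw [ellD, invSP_sigS, nspSP_sigS, zero_add]

lemma LD_sigS (S : Finset (Fin n)) : LD (sigS S) = ∑ a ∈ S, ((a : ℕ) + 1) / 2 := by
  rw [LD, oinvSP_sigS, onspSP_sigS, zero_add]

lemma lt_of_adj {α : Type*} [Preorder α] (g : ℕ → α) (m : ℕ)
    (h : ∀ i, i + 1 < m → g i < g (i+1)) :
    ∀ b, b < m → ∀ a, a < b → g a < g b := by
  intro b
  induction b with
  | zero => intro _ a ha; omega
  | succ k ih =>
    intro hb a ha
    rcases Nat.lt_or_ge a k with h' | h'
    · exact lt_trans (ih (by omega) a h') (h k hb)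
    · have hak : a = k := by omega
      subst hak
      exact h a hb

lemma card_sign_sigS (S : Finset (Fin n)) :
    (Finset.univ.filter (fun i => (sigS S).2 i = true)).card = S.card := by
  apply Finset.card_nbij (i := (qS S).symm)
  · intro i hi
    simp only [Finset.mem_coe, Finset.mem_filter, sigS, decide_eq_true_eq] at hi
    exact hi.2
  · exact (qS S).symm.injective.injOn
  · intro a ha
    refine ⟨qS S a, ?_, by simp⟩
    simp only [Finset.coe_filter, Set.mem_setOf_eq, Finset.mem_univ, true_and, sigS,
      decide_eq_true_eq, Equiv.symm_apply_apply]
    exact ha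

lemma isEvenSP_sigS (S : Finset (Fin n)) (hS : Even S.card) : IsEvenSP (sigS S) := by
  rw [IsEvenSP, card_sign_sigS]
  exact hS

lemma inQuot_sigS (S : Finset (Fin n)) : InQuot (sigS S) (Finset.Icc 1 (n-1)) := by
  intro i hi
  rw [Finset.mem_Icc] at hi
  rw [dval, dval, if_neg (by omega), if_neg (by omega)]
  exact sval_mono S (by omega) (by omega) (by omega)

lemma negSet_sigS (S : Finset (Fin n)) :
    Finset.univ.filter (fun a => (sigS S).2 ((sigS S).1.symm a) = true) = S := by
  ext a
  simp only [Finset.mem_filter, Finset.mem_univ, true_and, sigS, Equiv.symm_symm,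
    Equiv.symm_apply_apply, decide_eq_true_eq]

lemma sigS_surj (σ : SP n) (hq : InQuot σ (Finset.Icc 1 (n-1))) :
    sigS (Finset.univ.filter (fun a => σ.2 (σ.1.symm a) = true)) = σ := by
  set S := Finset.univ.filter (fun a => σ.2 (σ.1.symm a) = true) with hSdef
  have hval : ∀ i : Fin n, sval σ ((i : ℕ) + 1) = mS S (σ.1 i) := by
    intro i
    have hin := i.isLt
    rw [sval, dif_pos ⟨by omega, by omega⟩]
    have hfe : (⟨(i : ℕ) + 1 - 1, by omega⟩ : Fin n) = i := Fin.ext (by simp)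
    rw [hfe]
    cases h2 : σ.2 i with
    | false =>
      have hm : σ.1 i ∉ S := by simp [hSdef, h2]
      simp [mS, hm, h2]
    | true =>
      have hm : σ.1 i ∈ S := by simp [hSdef, h2]
      simp [mS, hm, h2]
  have hmono : StrictMono (fun i : Fin n => mS S (σ.1 i)) := by
    intro i j hij
    have hadj : ∀ t, t + 1 < n → sval σ (t+1) < sval σ (t+1+1) := by
      intro t ht
      have hmem : t + 1 ∈ Finset.Icc 1 (n-1) := by rw [Finset.mem_Icc]; omega
      have := hq (t+1) hmem
      rw [dval, dval, if_neg (by omega), if_neg (by omega)] at this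
      exact this
    have hgl := lt_of_adj (fun t => sval σ (t+1)) n hadj (j : ℕ) j.isLt (i : ℕ) hij
    simpa only [hval] using hgl
  have hmono2 : StrictMono (fun i : Fin n => mS S ((qS S).symm i)) :=
    fun i j hij => qS_symm_mono S hij
  have hKcard : (Finset.univ.image (mS S)).card = n := by
    rw [Finset.card_image_of_injective _ (mS_injective S)]
    simp
  have he1 := Finset.orderEmbOfFin_unique hKcard
    (f := fun i : Fin n => mS S (σ.1 i))
    (fun i => Finset.mem_image_of_mem _ (Finset.mem_univ _)) hmono
  have he2 := Finset.orderEmbOfFin_unique hKcard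
    (f := fun i : Fin n => mS S ((qS S).symm i))
    (fun i => Finset.mem_image_of_mem _ (Finset.mem_univ _)) hmono2
  have heq : ∀ i, mS S (σ.1 i) = mS S ((qS S).symm i) := by
    intro i
    have := congrFun (he1.trans he2.symm) i
    simpa using this
  have hperm : (qS S).symm = σ.1 := by
    apply Equiv.ext
    intro i
    exact (mS_injective S (heq i)).symm
  rw [sigS]
  refine Prod.ext hperm ?_
  funext i
  rw [hperm]
  simp only [hSdef]
  cases h2 : σ.2 i with
  | false => simp [Equiv.symm_apply_apply, h2]
  | true => simp [Equiv.symm_apply_apply, h2]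

end Dev

/-- Lemma 5.1: the sign-twisted generating function of the odd length over
`D_n^{[n-1]}` factors as `∏_{i=2}^{n} (1 + (-1)^{i-1} x^{⌊i/2⌋})`. -/
theorem stmt9 (n : ℕ) (hn : 0 < n) :
    genD n (Finset.Icc 1 (n - 1)) =
      ∏ i ∈ Finset.Icc 2 n, (1 + (-1 : Polynomial ℤ) ^ (i - 1) * X ^ (i / 2)) := by
  classical
  set c : Fin n → Polynomial ℤ :=
    fun a => (-1 : Polynomial ℤ) ^ (a : ℕ) * X ^ (((a : ℕ) + 1) / 2) with hc
  -- Step 1: reindex the sum by the set of negated values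
  have hstep1 : genD n (Finset.Icc 1 (n-1)) =
      ∑ S ∈ Finset.univ.filter (fun S : Finset (Fin n) => Even S.card),
        ∏ a ∈ S, c a := by
    rw [genD]
    symm
    apply Finset.sum_bij (i := fun S _ => sigS S)
    · intro S hS
      rw [Finset.mem_filter] at hS ⊢
      exact ⟨Finset.mem_univ _, isEvenSP_sigS S hS.2, inQuot_sigS S⟩
    · intro S1 h1 S2 h2 heq
      rw [← negSet_sigS S1, ← negSet_sigS S2, heq]
    · intro σ hσ
      rw [Finset.mem_filter] at hσ
      obtain ⟨-, heven, hquot⟩ := hσ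
      set S := Finset.univ.filter (fun a => σ.2 (σ.1.symm a) = true) with hS
      have hs := sigS_surj σ hquot
      refine ⟨S, ?_, hs⟩
      rw [Finset.mem_filter]
      refine ⟨Finset.mem_univ _, ?_⟩
      have hcard := card_sign_sigS S
      rw [hs] at hcard
      rw [IsEvenSP] at heven
      rw [← hcard]
      exact heven
    · intro S hS
      rw [ellD_sigS, LD_sigS, ← Finset.prod_pow_eq_pow_sum, ← Finset.prod_pow_eq_pow_sum,
        ← Finset.prod_mul_distrib]
  -- Step 2: algebra over subsets
  have h20 : (2 : Polynomial ℤ) ≠ 0 := by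
    intro h
    have := congrArg (Polynomial.eval 0) h
    norm_num at this
  have hca : c ⟨0, hn⟩ = 1 := by simp [hc]
  have hP : ∏ a : Fin n, (c a + 1) = ∑ S : Finset (Fin n), ∏ a ∈ S, c a := by
    rw [Finset.prod_add, Finset.powerset_univ]
    apply Finset.sum_congr rfl
    intro t _
    rw [Finset.prod_const_one, mul_one]
  have hN : ∏ a : Fin n, (-c a + 1) =
      ∑ S : Finset (Fin n), (-1 : Polynomial ℤ) ^ S.card * ∏ a ∈ S, c a := by
    rw [Finset.prod_add, Finset.powerset_univ]
    apply Finset.sum_congr rfl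
    intro t _
    rw [Finset.prod_const_one, mul_one]
    calc ∏ a ∈ t, -c a = ∏ a ∈ t, ((-1) * c a) := by
          apply Finset.prod_congr rfl; intro a _; ring
      _ = (-1 : Polynomial ℤ) ^ t.card * ∏ a ∈ t, c a := by
          rw [Finset.prod_mul_distrib, Finset.prod_const]
  have hNzero : ∏ a : Fin n, (-c a + 1) = 0 :=
    Finset.prod_eq_zero (Finset.mem_univ (⟨0, hn⟩ : Fin n)) (by rw [hca]; ring)
  have h2sum : (2 : Polynomial ℤ) *
      ∑ S ∈ Finset.univ.filter (fun S : Finset (Fin n) => Even S.card), ∏ a ∈ S, c a =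
      (∏ a : Fin n, (c a + 1)) + ∏ a : Fin n, (-c a + 1) := by
    rw [hP, hN, ← Finset.sum_add_distrib]
    have hterm : ∀ S : Finset (Fin n),
        (∏ a ∈ S, c a) + (-1 : Polynomial ℤ) ^ S.card * ∏ a ∈ S, c a =
        if Even S.card then 2 * ∏ a ∈ S, c a else 0 := by
      intro S
      by_cases h : Even S.card
      · rw [if_pos h, h.neg_one_pow]; ring
      · rw [if_neg h, (Nat.not_even_iff_odd.1 h).neg_one_pow]; ring
    rw [Finset.sum_congr rfl (fun S _ => hterm S), ← Finset.sum_filter, Finset.mul_sum]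
  have hmainalg : ∑ S ∈ Finset.univ.filter (fun S : Finset (Fin n) => Even S.card),
      ∏ a ∈ S, c a = ∏ a ∈ Finset.univ.erase (⟨0, hn⟩ : Fin n), (c a + 1) := by
    apply mul_left_cancel₀ h20
    rw [h2sum, hNzero, add_zero, ← Finset.mul_prod_erase Finset.univ _
      (Finset.mem_univ (⟨0, hn⟩ : Fin n)), hca]
    norm_num
  have hreindex : ∏ a ∈ Finset.univ.erase (⟨0, hn⟩ : Fin n), (c a + 1) =
      ∏ i ∈ Finset.Icc 2 n, (1 + (-1 : Polynomial ℤ) ^ (i - 1) * X ^ (i / 2)) := by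
    refine Finset.prod_bij (i := fun a _ => (a : ℕ) + 1) ?_ ?_ ?_ ?_
    · intro a ha
      rw [Finset.mem_erase] at ha
      have hane : (a : ℕ) ≠ 0 := fun h => ha.1 (Fin.ext h)
      have := a.isLt
      show (a : ℕ) + 1 ∈ Finset.Icc 2 n
      rw [Finset.mem_Icc]
      omega
    · intro a1 h1 a2 h2 h
      exact Fin.ext (by omega)
    · intro i hi
      rw [Finset.mem_Icc] at hi
      have hin : i - 1 < n := by omega
      refine ⟨⟨i - 1, hin⟩, ?_, by simp; omega⟩
      rw [Finset.mem_erase]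
      exact ⟨fun h => by have := congrArg Fin.val h; simp at this; omega, Finset.mem_univ _⟩
    · intro a ha
      rw [hc]
      have h1 : (a : ℕ) + 1 - 1 = (a : ℕ) := rfl
      rw [h1, add_comm]
  rw [hstep1, hmainalg, hreindex]


end OddLength
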